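/- For every integer k ≥ 1 and every even integer j with 2 ≤ j ≤ k-1, the number a_{jk} = Σ_{i=k-j}^{k-1} (-1/2)^i · (j)_{k-i} · (k-1+i)!/((k-1-i)!·i!) equals zero. -/

import Mathlib

open Polynomial Finset

private lemma natDeg_one_sub : ((1 - X : ℚ[X])).natDegree ≤ 1 :=
  (natDegree_sub_le _ _).trans (by simp)

private lemma natDeg_one_add : ((1 + X : ℚ[X])).natDegree ≤ 1 :=
  (natDegree_add_le _ _).trans (by simp)

private lemma reflect_one_sub_pow (p : ℕ) :
    reflect p ((1 - X : ℚ[X]) ^ p) = (X - 1) ^ p := by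
  induction p with
  | zero => simp
  | succ p ih =>
    have h := reflect_mul ((1 - X : ℚ[X]) ^ p) (1 - X)
      ((natDegree_pow_le).trans (by nlinarith [natDeg_one_sub])) natDeg_one_sub
    have hC : (C (-1 : ℚ) : ℚ[X]) = -1 := by rw [map_neg, map_one]
    have h1 : reflect 1 ((1 : ℚ[X]) - X) = X - 1 := by
      have e : (1 : ℚ[X]) - X = 1 + C (-1) * X := by rw [hC]; ring
      rw [e, reflect_add, reflect_C_mul, reflect_one, reflect_one_X, hC]
      ring
    rw [pow_succ, h, ih, h1, ← pow_succ]

private lemma reflect_one_add_pow (N : ℕ) :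
    reflect N ((1 + X : ℚ[X]) ^ N) = (1 + X) ^ N := by
  induction N with
  | zero => simp
  | succ N ih =>
    have h := reflect_mul ((1 + X : ℚ[X]) ^ N) (1 + X)
      ((natDegree_pow_le).trans (by nlinarith [natDeg_one_add])) natDeg_one_add
    have h1 : reflect 1 ((1 : ℚ[X]) + X) = 1 + X := by
      rw [reflect_add, reflect_one, reflect_one_X]
      ring
    rw [pow_succ, h, ih, h1, ← pow_succ]

/-- The middle coefficient of `(1-X)^p (1+X)^{2n-p}` vanishes for odd `p`. -/
private lemma middle_coeff_zero (p n : ℕ) (hpn : p ≤ n) (hp : Odd p) :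
    ((1 - X : ℚ[X]) ^ p * (1 + X) ^ (2 * n - p)).coeff n = 0 := by
  set f : ℚ[X] := (1 - X) ^ p * (1 + X) ^ (2 * n - p) with hf
  have hdeg1 : ((1 - X : ℚ[X]) ^ p).natDegree ≤ p :=
    (natDegree_pow_le).trans (by nlinarith [natDeg_one_sub])
  have hdeg2 : ((1 + X : ℚ[X]) ^ (2 * n - p)).natDegree ≤ 2 * n - p :=
    (natDegree_pow_le).trans (by nlinarith [natDeg_one_add])
  have hsum : p + (2 * n - p) = 2 * n := by omega
  have hrefl : reflect (p + (2 * n - p)) f = -f := by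
    rw [hf, reflect_mul _ _ hdeg1 hdeg2, reflect_one_sub_pow, reflect_one_add_pow]
    have : ((X : ℚ[X]) - 1) ^ p = -((1 - X) ^ p) := by
      rw [← neg_sub (1 : ℚ[X]) X, hp.neg_pow]
    rw [this]; ring
  rw [hsum] at hrefl
  have h1 : (reflect (2 * n) f).coeff n = f.coeff n := by
    rw [coeff_reflect, revAt_le (by omega : n ≤ 2 * n)]
    congr 1; omega
  rw [hrefl, coeff_neg] at h1
  linarith

/-- Key combinatorial identity: for odd `p ≤ n`,
`∑_{m=0}^{p} (-2)^m C(p,m) C(2n-m, n) = 0`. -/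
private lemma key_sum (p n : ℕ) (hpn : p ≤ n) (hp : Odd p) :
    ∑ m ∈ range (p + 1),
      (-2 : ℚ) ^ m * (p.choose m : ℚ) * ((2 * n - m).choose n : ℚ) = 0 := by
  have hpoly : ∑ m ∈ range (p + 1),
      ((-2 : ℚ[X]) * X) ^ m * (1 + X) ^ (2 * n - m) * (p.choose m : ℚ[X])
      = (1 - X) ^ p * (1 + X) ^ (2 * n - p) := by
    have step : ∀ m ∈ range (p + 1),
        ((-2 : ℚ[X]) * X) ^ m * (1 + X) ^ (2 * n - m) * (p.choose m : ℚ[X])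
        = ((-2 : ℚ[X]) * X) ^ m * (1 + X) ^ (p - m) * (p.choose m : ℚ[X])
            * (1 + X) ^ (2 * n - p) := by
      intro m hm
      rw [mem_range] at hm
      have : 2 * n - m = (p - m) + (2 * n - p) := by omega
      rw [this, pow_add]; ring
    rw [sum_congr rfl step, ← sum_mul, ← add_pow]
    congr 1
    ring
  have hco := congrArg (fun q : ℚ[X] => q.coeff n) hpoly
  try simp only at hco
  rw [middle_coeff_zero p n hpn hp, finset_sum_coeff] at hco
  rw [← hco]
  apply sum_congr rfl
  intro m hm
  rw [mem_range] at hm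
  have hmn : m ≤ n := by omega
  have c1 : (-2 : ℚ[X]) = C (-2 : ℚ) := by
    rw [map_neg, map_ofNat]
  have c2 : ((p.choose m : ℚ[X])) = C ((p.choose m : ℚ)) := by
    rw [Polynomial.C_eq_natCast]
  have e1 : ((-2 : ℚ[X]) * X) ^ m * (1 + X) ^ (2 * n - m) * (p.choose m : ℚ[X])
      = C ((-2 : ℚ) ^ m * (p.choose m : ℚ)) * (X ^ m * (1 + X) ^ (2 * n - m)) := by
    rw [c1, c2, mul_pow, ← C_pow, map_mul]
    ring
  rw [e1, coeff_C_mul]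
  have h := coeff_X_pow_mul ((1 + X : ℚ[X]) ^ (2 * n - m)) m (n - m)
  rw [show n - m + m = n by omega] at h
  rw [h, coeff_one_add_X_pow]
  have hc : (2 * n - m).choose (n - m) = (2 * n - m).choose n := by
    have h2 := Nat.choose_symm (show n ≤ 2 * n - m by omega)
    rw [show 2 * n - m - n = n - m by omega] at h2
    exact h2
  rw [hc]

/-- For `k ≥ 1` and even `j` with `2 ≤ j ≤ k-1`,
`a_{jk} = ∑_{i=k-j}^{k-1} (-1/2)^i (j)_{k-i} (k-1+i)!/((k-1-i)! i!) = 0`. -/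
theorem stmt_5 (k j : ℕ) (hk : 1 ≤ k) (hj2 : 2 ≤ j) (hj : j ≤ k - 1) (hje : Even j) :
    ∑ i ∈ Finset.Icc (k - j) (k - 1),
      (-(1 : ℚ) / 2) ^ i * (Nat.descFactorial j (k - i) : ℚ) *
        (Nat.factorial (k - 1 + i) : ℚ) /
          ((Nat.factorial (k - 1 - i) : ℚ) * (Nat.factorial i : ℚ)) = 0 := by
  set n := k - 1 with hn
  set p := j - 1 with hp
  have hjn : j ≤ n := hj
  have hpn : p ≤ n := by omega
  have hpodd : Odd p := by
    rcases hje with ⟨t, ht⟩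
    exact ⟨t - 1, by omega⟩
  have hjp : j = p + 1 := by omega
  have himg : Finset.Icc (k - j) (k - 1) = (Finset.range j).image (fun m => n - m) := by
    ext a
    simp only [Finset.mem_Icc, Finset.mem_image, Finset.mem_range]
    constructor
    · intro ha; exact ⟨n - a, by omega, by omega⟩
    · rintro ⟨m, hm, rfl⟩; omega
  have hinj : ∀ x ∈ Finset.range j, ∀ y ∈ Finset.range j, n - x = n - y → x = y := by
    intro a ha b hb hab
    rw [Finset.mem_range] at ha hb
    omega
  rw [himg, Finset.sum_image hinj]
  have hterm : ∀ m ∈ Finset.range j,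
      (-(1 : ℚ) / 2) ^ (n - m) * (Nat.descFactorial j (k - (n - m)) : ℚ) *
        (Nat.factorial (n + (n - m)) : ℚ) /
          ((Nat.factorial (n - (n - m)) : ℚ) * (Nat.factorial (n - m) : ℚ))
      = ((-(1:ℚ)/2) ^ n * j * Nat.factorial n) *
          ((-2 : ℚ) ^ m * (p.choose m : ℚ) * ((2 * n - m).choose n : ℚ)) := by
    intro m hm
    rw [Finset.mem_range] at hm
    have hmn : m ≤ n := by omega
    have i1 : k - (n - m) = m + 1 := by omega
    have i2 : n + (n - m) = 2 * n - m := by omega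
    have i3 : n - (n - m) = m := by omega
    rw [i1, i2, i3]
    have h2 : j * p.choose m = j.choose (m + 1) * (m + 1) := by
      rw [hjp]
      simpa [Nat.succ_eq_add_one] using Nat.add_one_mul_choose_eq p m
    have e1 : (Nat.descFactorial j (m + 1) : ℚ)
        = (j : ℚ) * (Nat.factorial m : ℚ) * (p.choose m : ℚ) := by
      rw [Nat.descFactorial_eq_factorial_mul_choose, Nat.factorial_succ]
      have hq2 : (j : ℚ) * (p.choose m : ℚ) = (j.choose (m + 1) : ℚ) * ((m : ℚ) + 1) := by
        exact_mod_cast h2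
      push_cast
      linear_combination (-(Nat.factorial m : ℚ)) * hq2
    have e2 : (Nat.factorial (2 * n - m) : ℚ)
        = ((2 * n - m).choose n : ℚ) * (Nat.factorial n : ℚ) * (Nat.factorial (n - m) : ℚ) := by
      have h1 : (2 * n - m).choose n * Nat.factorial n * Nat.factorial (2 * n - m - n)
          = Nat.factorial (2 * n - m) :=
        Nat.choose_mul_factorial_mul_factorial (by omega)
      rw [show 2 * n - m - n = n - m by omega] at h1
      exact_mod_cast h1.symm
    have e3 : (-(1:ℚ)/2) ^ (n - m) = (-(1:ℚ)/2) ^ n * (-2 : ℚ) ^ m := by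
      calc (-(1:ℚ)/2) ^ (n - m)
          = (-(1:ℚ)/2) ^ (n - m) * ((-(1:ℚ)/2) * (-2)) ^ m := by norm_num
        _ = ((-(1:ℚ)/2) ^ (n - m) * (-(1:ℚ)/2) ^ m) * (-2 : ℚ) ^ m := by
            rw [mul_pow]; ring
        _ = (-(1:ℚ)/2) ^ n * (-2 : ℚ) ^ m := by
            rw [← pow_add, show n - m + m = n by omega]
    rw [e1, e2, e3]
    have hfm : (Nat.factorial m : ℚ) ≠ 0 := by positivity
    have hfnm : (Nat.factorial (n - m) : ℚ) ≠ 0 := by positivity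
    field_simp
    try ring
  rw [Finset.sum_congr rfl hterm, ← Finset.mul_sum, hjp]
  rw [key_sum p n hpn hpodd, mul_zero]
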